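/- Cut optimality implies the minimax property: in a minimum spanning tree T* of a connected weighted graph G, for any two vertices k and l, the maximum edge cost along the unique path in T* from k to l equals the minimum over all paths w from k to l in G of the maximum edge cost along w. -/

import Mathlib

open SimpleGraph Walk

section Aux

variable {V : Type*}

/-- If `e` lies on a path from `a` to `b`, then its endpoints `u`, `v` (in order) satisfy:
`a` reaches `u` and `v` reaches `b` avoiding `e`. -/
private lemma reach_split {T : SimpleGraph V} {a b : V} {e : Sym2 V}
    (p : T.Walk a b) (hp : p.IsPath) (he : e ∈ p.edges) :
    ∃ u v : V, e = s(u, v) ∧ (T.deleteEdges {e}).Reachable a u ∧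
      (T.deleteEdges {e}).Reachable v b := by
  classical
  induction p with
  | nil => simp at he
  | @cons x y w h q ih =>
    rw [Walk.edges_cons, List.mem_cons] at he
    rcases he with he | he
    · refine ⟨x, y, he, Reachable.refl _, ?_⟩
      have hnot : e ∉ q.edges := by
        have := hp.edges_nodup
        rw [Walk.edges_cons, List.nodup_cons] at this
        rw [he]; exact this.1
      have hsub : ∀ f ∈ q.edges, f ∈ (T.deleteEdges {e}).edgeSet := by
        intro f hf
        rw [SimpleGraph.edgeSet_deleteEdges]
        exact ⟨q.edges_subset_edgeSet hf, by rintro rfl; exact hnot hf⟩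
      exact (q.transfer _ hsub).reachable
    · obtain ⟨u, v, huv, h1, h2⟩ := ih (hp.of_cons) he
      have hne : s(x, y) ≠ e := by
        have := hp.edges_nodup
        rw [Walk.edges_cons, List.nodup_cons] at this
        rintro rfl; exact this.1 he
      have hadj : (T.deleteEdges {e}).Adj x y := by
        rw [SimpleGraph.deleteEdges_adj]
        exact ⟨h, by simpa using hne⟩
      exact ⟨u, v, huv, hadj.reachable.trans h1, h2⟩

/-- Lift reachability from `T` to a graph containing `T` minus one edge, provided the
endpoints of that edge are reachable in the new graph. -/
private lemma reach_lift {T T' : SimpleGraph V} {e : Sym2 V} {u v : V}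
    (hde : T.deleteEdges {e} ≤ T') (huv : e = s(u, v)) (huvT' : T'.Reachable u v) :
    ∀ {x y : V}, T.Walk x y → T'.Reachable x y := by
  intro x y w
  induction w with
  | nil => exact Reachable.refl _
  | @cons s t r h q ih =>
    refine Reachable.trans ?_ ih
    by_cases hst : s(s, t) = e
    · rw [huv, Sym2.eq_iff] at hst
      rcases hst with ⟨rfl, rfl⟩ | ⟨rfl, rfl⟩
      · exact huvT'
      · exact huvT'.symm
    · exact (hde (by rw [SimpleGraph.deleteEdges_adj]; exact ⟨h, by simpa using hst⟩)).reachable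

private lemma maximum_le_of_exists {l₁ l₂ : List ℝ}
    (h : ∀ x ∈ l₁, ∃ y ∈ l₂, x ≤ y) : l₁.maximum ≤ l₂.maximum := by
  apply List.maximum_le_of_forall_le
  intro a ha
  obtain ⟨y, hy, hxy⟩ := h a ha
  exact le_trans (by exact_mod_cast hxy) (List.le_maximum_of_mem' hy)

end Aux

/-- A minimum spanning tree of a weighted graph: a spanning tree (on the whole vertex
set) of minimum total edge cost among all spanning trees contained in `G`. -/
def IsMST {V : Type*} (G : SimpleGraph V) (c : Sym2 V → ℝ) (T : SimpleGraph V) : Prop :=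
  T.IsTree ∧ T ≤ G ∧
    ∀ T' : SimpleGraph V, T'.IsTree → T' ≤ G →
      (∑ᶠ e ∈ T.edgeSet, c e) ≤ ∑ᶠ e ∈ T'.edgeSet, c e

section Cut

variable {V : Type*} [Fintype V] {G T : SimpleGraph V} {c : Sym2 V → ℝ}

/-- Cut optimality: every edge on the tree-path between endpoints of a graph edge `ab`
costs at most `c s(a,b)`. -/
private lemma cut_optimal (hT : IsMST G c T) {a b : V} (hab : G.Adj a b)
    {p : T.Walk a b} (hp : p.IsPath) : ∀ e ∈ p.edges, c e ≤ c s(a, b) := by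
  classical
  intro e he
  by_cases hTab : T.Adj a b
  · -- the path must be the single edge
    have huniq : (⟨p, hp⟩ : T.Path a b) = SimpleGraph.Path.singleton hTab :=
      hT.1.IsAcyclic.path_unique _ _
    have : p.edges = [s(a, b)] := by
      have := congrArg (fun q : T.Path a b => (q : T.Walk a b).edges) huniq
      simpa [SimpleGraph.Path.singleton] using this
    rw [this] at he
    simp only [List.mem_singleton] at he
    rw [he]
  · have hne : a ≠ b := hab.ne
    have heT : e ∈ T.edgeSet := p.edges_subset_edgeSet he
    have hsabT : s(a, b) ∉ T.edgeSet := hTab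
    have hesab : e ≠ s(a, b) := by rintro rfl; exact hsabT heT
    set T' : SimpleGraph V := T.deleteEdges {e} ⊔ SimpleGraph.edge a b with hT'def
    obtain ⟨u, v, huv, hau, hvb⟩ := reach_split p hp he
    have hde : T.deleteEdges {e} ≤ T' := le_sup_left
    have habT' : T'.Adj a b := by
      refine Or.inr ?_
      rw [SimpleGraph.edge_adj]
      exact ⟨Or.inl ⟨rfl, rfl⟩, hne⟩
    -- T' edge set
    have hes : T'.edgeSet = (T.edgeSet \ {e}) ∪ {s(a, b)} := by
      rw [hT'def, SimpleGraph.edgeSet_sup, SimpleGraph.edgeSet_deleteEdges,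
        SimpleGraph.edge_edgeSet_of_ne hne]
    -- connectivity
    have huvT' : T'.Reachable u v :=
      ((hau.mono hde).symm.trans habT'.reachable).trans (hvb.mono hde).symm
    have hconn : T'.Connected := by
      rw [SimpleGraph.connected_iff]
      refine ⟨fun x y => ?_, ⟨a⟩⟩
      obtain ⟨w⟩ := hT.1.isConnected.preconnected x y
      exact reach_lift hde huv huvT' w
    -- a and b are not reachable after deleting e
    have hnr : ¬(T.deleteEdges {e}).Reachable a b := by
      rintro ⟨w⟩
      have hsub : ∀ f ∈ (w.toPath : (T.deleteEdges {e}).Walk a b).edges, f ∈ T.edgeSet := by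
        intro f hf
        have := (w.toPath : (T.deleteEdges {e}).Walk a b).edges_subset_edgeSet hf
        rw [SimpleGraph.edgeSet_deleteEdges] at this
        exact this.1
      set q := (w.toPath : (T.deleteEdges {e}).Walk a b).transfer T hsub with hq
      have hqp : q.IsPath := w.toPath.2.transfer hsub
      have : (⟨q, hqp⟩ : T.Path a b) = ⟨p, hp⟩ := hT.1.IsAcyclic.path_unique _ _
      have heq : e ∈ q.edges := by
        rw [Subtype.mk.injEq] at this
        rw [this]; exact he
      rw [hq, Walk.edges_transfer] at heq
      have := (w.toPath : (T.deleteEdges {e}).Walk a b).edges_subset_edgeSet heq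
      rw [SimpleGraph.edgeSet_deleteEdges] at this
      exact this.2 rfl
    -- acyclicity of T'
    have hacyc : T'.IsAcyclic := by
      intro x q hq
      by_cases hmem : s(a, b) ∈ q.edges
      · have hbridge : T'.IsBridge s(a, b) := by
          rw [SimpleGraph.isBridge_iff]
          refine fun hr => hnr (hr.mono ?_)
          rw [← SimpleGraph.edgeSet_subset_edgeSet]
          rw [SimpleGraph.edgeSet_deleteEdges, hes, SimpleGraph.edgeSet_deleteEdges]
          intro f hf
          rcases hf with ⟨hf1 | hf1, hf2⟩
          · exact hf1
          · exact absurd hf1 hf2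
        rw [SimpleGraph.isBridge_iff_forall_cycle_notMem habT'] at hbridge
        exact hbridge q hq hmem
      · have hsub : ∀ f ∈ q.edges, f ∈ T.edgeSet := by
          intro f hf
          have := q.edges_subset_edgeSet hf
          rw [hes] at this
          rcases this with ⟨hf1, _⟩ | hf1
          · exact hf1
          · exact absurd (Set.mem_singleton_iff.mp hf1 ▸ hf) hmem
        exact hT.1.IsAcyclic (q.transfer T hsub) (hq.transfer hsub)
    have htree' : T'.IsTree := ⟨hconn, hacyc⟩
    have hle' : T' ≤ G := by
      refine sup_le ((SimpleGraph.deleteEdges_le _).trans hT.2.1) ?_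
      intro x y hxy
      rw [SimpleGraph.edge_adj] at hxy
      rcases hxy.1 with ⟨rfl, rfl⟩ | ⟨rfl, rfl⟩
      · exact hab
      · exact hab.symm
    have hsum := hT.2.2 T' htree' hle'
    have hfin : (T.edgeSet \ {e}).Finite := Set.toFinite _
    have hsplitT : (∑ᶠ f ∈ T.edgeSet, c f) = (∑ᶠ f ∈ T.edgeSet \ {e}, c f) + c e := by
      have h1 : T.edgeSet = (T.edgeSet \ {e}) ∪ {e} := by
        rw [Set.diff_union_self, Set.union_eq_self_of_subset_right (by simpa using heT)]
      conv_lhs => rw [h1]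
      rw [finsum_mem_union (by simp) hfin (Set.finite_singleton e), finsum_mem_singleton]
    have hsplitT' : (∑ᶠ f ∈ T'.edgeSet, c f) = (∑ᶠ f ∈ T.edgeSet \ {e}, c f) + c s(a, b) := by
      rw [hes, finsum_mem_union ?_ hfin (Set.finite_singleton _), finsum_mem_singleton]
      simp only [Set.disjoint_singleton_right, Set.mem_diff, not_and]
      exact fun h => absurd h hsabT
    rw [hsplitT, hsplitT'] at hsum
    linarith

/-- Every edge on the tree path is dominated by some edge of any `G`-walk with the
same endpoints. -/
private lemma tree_path_dominated (hT : IsMST G c T) {k l : V} (q : G.Walk k l) :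
    ∀ (p : T.Walk k l), p.IsPath → ∀ e ∈ p.edges, ∃ f ∈ q.edges, c e ≤ c f := by
  classical
  induction q with
  | nil =>
    intro p hp e he
    have : p = Walk.nil := Walk.isPath_iff_eq_nil.mp hp
    rw [this] at he; simp at he
  | @cons x y w h q ih =>
    intro p hp e he
    obtain ⟨r⟩ := hT.1.isConnected.preconnected x y
    set r' := r.toPath with hr'
    obtain ⟨p'⟩ := hT.1.isConnected.preconnected y w
    set p'' := p'.toPath with hp''
    have hbp : ((r' : T.Walk x y).append (p'' : T.Walk y w)).bypass.IsPath := Walk.bypass_isPath _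
    have huniq : (⟨((r' : T.Walk x y).append (p'' : T.Walk y w)).bypass, hbp⟩ : T.Path x w)
        = ⟨p, hp⟩ := hT.1.IsAcyclic.path_unique _ _
    have hein : e ∈ ((r' : T.Walk x y).append (p'' : T.Walk y w)).bypass.edges := by
      rw [Subtype.mk.injEq] at huniq
      rw [huniq]; exact he
    have := Walk.edges_bypass_subset _ hein
    rw [Walk.edges_append, List.mem_append] at this
    rcases this with hcase | hcase
    · exact ⟨s(x, y), by simp, cut_optimal hT h r'.2 e hcase⟩
    · obtain ⟨f, hf, hef⟩ := ih (p'' : T.Walk y w) p''.2 e hcase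
      exact ⟨f, by simp [hf], hef⟩

end Cut

/-- in a minimum spanning tree `T` of a connected weighted graph `G`, for any
two vertices `k`, `l`, the maximum edge cost along the (unique) path in `T` from `k` to `l`
equals the minimum, over all paths from `k` to `l` in `G`, of the maximum edge cost. -/
theorem mst_path_minimax {V : Type*} [Fintype V] (G T : SimpleGraph V) (c : Sym2 V → ℝ)
    (hG : G.Connected) (hT : IsMST G c T) (k l : V)
    (p : T.Walk k l) (hp : p.IsPath) :
    IsLeast {m : WithBot ℝ | ∃ q : G.Walk k l, q.IsPath ∧ (q.edges.map c).maximum = m}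
      ((p.edges.map c).maximum) := by
  classical
  constructor
  · -- membership: transfer p to G
    have hsub : ∀ f ∈ p.edges, f ∈ G.edgeSet := fun f hf =>
      SimpleGraph.edgeSet_mono hT.2.1 (p.edges_subset_edgeSet hf)
    exact ⟨p.transfer G hsub, hp.transfer hsub, by rw [Walk.edges_transfer]⟩
  · rintro m ⟨q, hq, rfl⟩
    apply maximum_le_of_exists
    intro x hx
    rw [List.mem_map] at hx
    obtain ⟨e, he, rfl⟩ := hx
    obtain ⟨f, hf, hef⟩ := tree_path_dominated hT q p hp e he
    exact ⟨c f, List.mem_map_of_mem hf, hef⟩
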